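/- Let x ∈ ℝⁿ and let P ⊆ Ξ be measurable with ℙ[ξ ∈ P] > 0. Suppose Q(x, ξ(ω)) < +∞ for ℙ-almost every ω, that ω ↦ Q(x,ξ(ω))·1_{ξ∈P} is integrable, and that Q(x, E[ξ|P]) = E[Q(x,ξ) | ξ ∈ P]. Then there exists λ₀ ∈ D such that for ℙ-almost every ω with ξ(ω) = (T,h) ∈ P one has ⟨h − Tx, λ₀⟩ = Q(x, ξ(ω)). -/

import Mathlib

open MeasureTheory
open scoped BigOperators Classical

noncomputable section

/-- The space of alea `Ξ = ℝ^{l×n} × ℝ^l`: pairs `ξ = (T, h)`. -/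
abbrev Xi (l n : ℕ) := (Fin l → Fin n → ℝ) × (Fin l → ℝ)

/-- The dual admissible polyhedron `D = {λ : Wᵀλ ≤ q}`. -/
def polyD {l m : ℕ} (W : Fin l → Fin m → ℝ) (q : Fin m → ℝ) : Set (Fin l → ℝ) :=
  {lam | ∀ j, (∑ i, W i j * lam i) ≤ q j}

/-- Recourse cost `Q(x, ξ) = sup_{λ ∈ D} ⟨h - Tx, λ⟩ ∈ ℝ ∪ {+∞}` (as an `EReal`). -/
def Qfun {l n m : ℕ} (W : Fin l → Fin m → ℝ) (q : Fin m → ℝ)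
    (x : Fin n → ℝ) (ξ : Xi l n) : EReal :=
  ⨆ lam ∈ polyD W q, ((∑ i, (ξ.2 i - ∑ j, ξ.1 i j * x j) * lam i : ℝ) : EReal)

/-- A finite measurable partition of `α`, given as a `Finset` of sets. -/
def IsFinPartition {α : Type*} [MeasurableSpace α] (Ps : Finset (Set α)) : Prop :=
  (∀ P ∈ Ps, MeasurableSet P) ∧ ((Ps : Set (Set α)).PairwiseDisjoint id) ∧
    ⋃₀ (Ps : Set (Set α)) = Set.univ

/-- Conditional expectation `E[ξ | ξ ∈ P] = E[ξ 1_{ξ ∈ P}] / ℙ[ξ ∈ P]`. -/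
def condMean {Ω : Type*} [MeasurableSpace Ω] {l n : ℕ} (ℙ : Measure Ω)
    (ξ : Ω → Xi l n) (P : Set (Xi l n)) : Xi l n :=
  (ℙ (ξ ⁻¹' P)).toReal⁻¹ • ∫ ω in ξ ⁻¹' P, ξ ω ∂ℙ

/-- Expected cost-to-go of a partition: `V_Ps(x) = Σ_{P ∈ Ps, ℙ[ξ∈P] > 0} ℙ[ξ∈P] Q(x, E[ξ|P])`. -/
def Vpart {Ω : Type*} [MeasurableSpace Ω] {l n m : ℕ} (W : Fin l → Fin m → ℝ)
    (q : Fin m → ℝ) (ℙ : Measure Ω) (ξ : Ω → Xi l n) (Ps : Finset (Set (Xi l n)))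
    (x : Fin n → ℝ) : EReal :=
  ∑ P ∈ Ps, if 0 < ℙ (ξ ⁻¹' P) then
    ((ℙ (ξ ⁻¹' P)).toReal : EReal) * Qfun W q x (condMean ℙ ξ P) else 0

/-- True expected cost-to-go `V(x) = E[Q(x, ξ)] ∈ ℝ ∪ {+∞}`: the real integral when
`Q(x, ξ)` is integrable (a.e. finite with integrable real part), `+∞` otherwise. -/
def Vtrue {Ω : Type*} [MeasurableSpace Ω] {l n m : ℕ} (W : Fin l → Fin m → ℝ)
    (q : Fin m → ℝ) (ℙ : Measure Ω) (ξ : Ω → Xi l n) (x : Fin n → ℝ) : EReal :=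
  if (∀ᵐ ω ∂ℙ, Qfun W q x (ξ ω) ≠ ⊤) ∧
      Integrable (fun ω => (Qfun W q x (ξ ω)).toReal) ℙ then
    (((∫ ω, (Qfun W q x (ξ ω)).toReal ∂ℙ) : ℝ) : EReal)
  else ⊤

/-- `Ps` ℙ-refines `ℛ`: every `P ∈ Ps` is ℙ-essentially contained in some `R ∈ ℛ`. -/
def PRefines {Ω : Type*} [MeasurableSpace Ω] {l n : ℕ} (ℙ : Measure Ω) (ξ : Ω → Xi l n)
    (Ps ℛ : Finset (Set (Xi l n))) : Prop :=
  ∀ P ∈ Ps, ∃ R ∈ ℛ, ℙ (ξ ⁻¹' (P ∩ R)) = ℙ (ξ ⁻¹' P)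

/-- Conditional expectation `E[Q(x,ξ) | ξ ∈ P] ∈ ℝ ∪ {+∞}`: equal to
`E[Q(x,ξ) 1_{ξ∈P}] / ℙ[ξ∈P]` when `Q(x,ξ) 1_{ξ∈P}` is integrable, `+∞` otherwise. -/
def condQ {Ω : Type*} [MeasurableSpace Ω] {l n m : ℕ} (W : Fin l → Fin m → ℝ)
    (q : Fin m → ℝ) (ℙ : Measure Ω) (ξ : Ω → Xi l n) (x : Fin n → ℝ)
    (P : Set (Xi l n)) : EReal :=
  if (∀ᵐ ω ∂ℙ, ξ ω ∈ P → Qfun W q x (ξ ω) ≠ ⊤) ∧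
      IntegrableOn (fun ω => (Qfun W q x (ξ ω)).toReal) (ξ ⁻¹' P) ℙ then
    (((ℙ (ξ ⁻¹' P)).toReal⁻¹ * ∫ ω in ξ ⁻¹' P, (Qfun W q x (ξ ω)).toReal ∂ℙ : ℝ) : EReal)
  else ⊤

/-- Subdifferential of an `EReal`-valued function at `x`. -/
def SubDiff {n : ℕ} (f : (Fin n → ℝ) → EReal) (x : Fin n → ℝ) : Set (Fin n → ℝ) :=
  {g | ∀ y, f x + ((∑ i, g i * (y i - x i) : ℝ) : EReal) ≤ f y}

open scoped RealInnerProductSpace in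

lemma lp_attain_aux {E : Type*} [NormedAddCommGroup E] [InnerProductSpace ℝ E]
    [FiniteDimensional ℝ E] {ι : Type*} [DecidableEq ι] (w : ι → E) (q : ι → ℝ) (c : E) (s : ℝ) :
    ∀ (N : ℕ) (J : Finset ι), J.card = N →
    (∃ lam, ∀ j ∈ J, ⟪w j, lam⟫ ≤ q j) →
    (∀ lam, (∀ j ∈ J, ⟪w j, lam⟫ ≤ q j) → ⟪c, lam⟫ ≤ s) →
    (∀ ε : ℝ, 0 < ε → ∃ lam, (∀ j ∈ J, ⟪w j, lam⟫ ≤ q j) ∧ s - ε < ⟪c, lam⟫) →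
    ∃ lam, (∀ j ∈ J, ⟪w j, lam⟫ ≤ q j) ∧ ⟪c, lam⟫ = s := by
  intro N
  induction N using Nat.strong_induction_on with
  | _ N IH =>
  intro J hcard hne hub happ
  classical
  set K : Submodule ℝ E := Submodule.span ℝ (insert c (w '' ↑J)) with hK
  have hcK : c ∈ K := Submodule.subset_span (Set.mem_insert _ _)
  have hwK : ∀ j ∈ J, w j ∈ K := fun j hj =>
    Submodule.subset_span (Set.mem_insert_of_mem _ ⟨j, hj, rfl⟩)
  have hproj : ∀ u ∈ K, ∀ v : E, ⟪u, (Submodule.orthogonalProjection K v : E)⟫ = ⟪u, v⟫ := by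
    intro u hu v
    have h1 : v - (Submodule.orthogonalProjection K v : E) ∈ Kᗮ :=
      K.sub_starProjection_mem_orthogonal v
    have h2 := (Submodule.mem_orthogonal K _).1 h1 u hu
    rw [inner_sub_right] at h2
    linarith
  choose lamraw hraw using fun k : ℕ => happ (1 / (k + 1)) (by positivity)
  set lam : ℕ → E := fun k => (Submodule.orthogonalProjection K (lamraw k) : E) with hlam
  have hfeas : ∀ k, ∀ j ∈ J, ⟪w j, lam k⟫ ≤ q j := by
    intro k j hj
    rw [hlam]; rw [hproj _ (hwK j hj)]
    exact (hraw k).1 j hj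
  have hval : ∀ k, s - 1 / (k + 1) < ⟪c, lam k⟫ := by
    intro k
    rw [hlam]; rw [hproj _ hcK]
    exact (hraw k).2
  have hvle : ∀ k, ⟪c, lam k⟫ ≤ s := fun k => hub _ (hfeas k)
  have hmemK : ∀ k, lam k ∈ K := fun k => (Submodule.orthogonalProjection K (lamraw k)).2
  by_cases hbdd : ∃ R, ∀ k, ‖lam k‖ ≤ R
  · -- bounded case
    obtain ⟨R, hR⟩ := hbdd
    obtain ⟨a, -, φ, hφ, htend⟩ :=
      (isCompact_closedBall (0 : E) R).tendsto_subseq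
        (fun k => Metric.mem_closedBall.2 (by simpa using hR k))
    refine ⟨a, ?_, ?_⟩
    · intro j hj
      have h1 : Filter.Tendsto (fun k => ⟪w j, lam (φ k)⟫) Filter.atTop (nhds ⟪w j, a⟫) :=
        Filter.Tendsto.inner tendsto_const_nhds htend
      exact le_of_tendsto h1 (Filter.Eventually.of_forall fun k => hfeas _ j hj)
    · have h1 : Filter.Tendsto (fun k => ⟪c, lam (φ k)⟫) Filter.atTop (nhds ⟪c, a⟫) :=
        Filter.Tendsto.inner tendsto_const_nhds htend
      have hlow : Filter.Tendsto (fun k : ℕ => s - 1 / ((φ k : ℝ) + 1)) Filter.atTop (nhds s) := by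
        have : Filter.Tendsto (fun k : ℕ => 1 / ((φ k : ℝ) + 1)) Filter.atTop (nhds 0) := by
          apply squeeze_zero (fun k => by positivity) (fun k => ?_)
            (tendsto_one_div_add_atTop_nhds_zero_nat)
          exact one_div_le_one_div_of_le (by positivity)
            (by exact_mod_cast Nat.succ_le_succ hφ.le_apply)
        simpa using tendsto_const_nhds.sub this
      have h2 : Filter.Tendsto (fun k => ⟪c, lam (φ k)⟫) Filter.atTop (nhds s) :=
        tendsto_of_tendsto_of_tendsto_of_le_of_le hlow tendsto_const_nhds
          (fun k => (hval (φ k)).le) (fun k => hvle (φ k))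
      exact tendsto_nhds_unique h1 h2
  · -- unbounded case
    push_neg at hbdd
    choose ψ hψ using fun R : ℕ => hbdd R
    have hψ' : ∀ k : ℕ, (k : ℝ) < ‖lam (ψ k)‖ := hψ
    have hpos : ∀ k : ℕ, (0:ℝ) < ‖lam (ψ (k+1))‖ := fun k =>
      lt_of_le_of_lt (by exact_mod_cast Nat.zero_le (k+1)) (hψ' (k+1))
    set dseq : ℕ → E := fun k => ‖lam (ψ (k+1))‖⁻¹ • lam (ψ (k+1)) with hdseq
    have hdnorm : ∀ k, ‖dseq k‖ = 1 := by
      intro k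
      rw [hdseq, norm_smul, norm_inv, norm_norm, inv_mul_cancel₀ (hpos k).ne']
    obtain ⟨d, -, φ, hφ, htend⟩ :=
      (isCompact_closedBall (0 : E) 1).tendsto_subseq (x := dseq)
        (fun k => Metric.mem_closedBall.2 (by rw [dist_zero_right, hdnorm k]))
    have hrk : Filter.Tendsto (fun k => ‖lam (ψ (φ k + 1))‖) Filter.atTop Filter.atTop := by
      apply Filter.tendsto_atTop_mono (fun k => (hψ' (φ k + 1)).le)
      apply Filter.tendsto_atTop_mono (fun k => ?_) tendsto_natCast_atTop_atTop
      exact_mod_cast Nat.le_succ_of_le hφ.le_apply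
    have hrinv : Filter.Tendsto (fun k => ‖lam (ψ (φ k + 1))‖⁻¹) Filter.atTop (nhds 0) :=
      Filter.Tendsto.inv_tendsto_atTop hrk
    have hdnorm1 : ‖d‖ = 1 := by
      have h1 := Filter.Tendsto.norm htend
      have h2 : Filter.Tendsto (fun k => ‖(dseq ∘ φ) k‖) Filter.atTop (nhds 1) := by
        simp only [Function.comp, hdnorm]
        exact tendsto_const_nhds
      exact tendsto_nhds_unique h1 h2
    have hdK : d ∈ K := by
      have hKcl : IsClosed (K : Set E) := Submodule.closed_of_finiteDimensional K
      exact hKcl.mem_of_tendsto htend (Filter.Eventually.of_forall fun k =>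
        K.smul_mem _ (hmemK _))
    have hinner : ∀ v : E, Filter.Tendsto (fun k => ⟪v, dseq (φ k)⟫) Filter.atTop
        (nhds ⟪v, d⟫) := fun v => Filter.Tendsto.inner tendsto_const_nhds htend
    have hwd : ∀ j ∈ J, ⟪w j, d⟫ ≤ 0 := by
      intro j hj
      refine le_of_tendsto_of_tendsto' (hinner (w j)) (by simpa using hrinv.mul_const (q j)) fun k => ?_
      have h1 : ⟪w j, dseq (φ k)⟫ = ‖lam (ψ (φ k + 1))‖⁻¹ * ⟪w j, lam (ψ (φ k + 1))⟫ := by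
        rw [hdseq]; exact real_inner_smul_right _ _ _
      rw [h1]
      exact mul_le_mul_of_nonneg_left (hfeas _ j hj) (inv_nonneg.2 (hpos _).le)
    have hcd : ⟪c, d⟫ = 0 := by
      refine le_antisymm ?_ ?_
      · refine le_of_tendsto_of_tendsto' (hinner c) (by simpa using hrinv.mul_const s) fun k => ?_
        have h1 : ⟪c, dseq (φ k)⟫ = ‖lam (ψ (φ k + 1))‖⁻¹ * ⟪c, lam (ψ (φ k + 1))⟫ := by
          rw [hdseq]; exact real_inner_smul_right _ _ _
        rw [h1]
        exact mul_le_mul_of_nonneg_left (hvle _) (inv_nonneg.2 (hpos _).le)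
      · refine le_of_tendsto_of_tendsto' (by simpa using hrinv.mul_const (s - 1)) (hinner c) fun k => ?_
        have h1 : ⟪c, dseq (φ k)⟫ = ‖lam (ψ (φ k + 1))‖⁻¹ * ⟪c, lam (ψ (φ k + 1))⟫ := by
          rw [hdseq]; exact real_inner_smul_right _ _ _
        rw [h1]
        refine mul_le_mul_of_nonneg_left ?_ (inv_nonneg.2 (hpos _).le)
        have := hval (ψ (φ k + 1))
        have h2 : (1 : ℝ) / ((ψ (φ k + 1) : ℝ) + 1) ≤ 1 := by
          have hp : (0:ℝ) < (ψ (φ k + 1) : ℝ) + 1 := by positivity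
          rw [div_le_one hp]; linarith [Nat.cast_nonneg (α := ℝ) (ψ (φ k + 1))]
        linarith
    -- J⁻ nonempty
    set Jneg : Finset ι := J.filter (fun j => ⟪w j, d⟫ < 0) with hJneg
    have hJnegne : Jneg.Nonempty := by
      by_contra hcon
      rw [Finset.not_nonempty_iff_eq_empty] at hcon
      have hzero : ∀ j ∈ J, ⟪w j, d⟫ = 0 := by
        intro j hj
        rcases lt_or_eq_of_le (hwd j hj) with h | h
        · have hmem : j ∈ Jneg := Finset.mem_filter.2 ⟨hj, h⟩
          rw [hcon] at hmem
          exact absurd hmem (Finset.notMem_empty j)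
        · exact h
      have hall : ∀ u ∈ K, ⟪u, d⟫ = 0 := by
        intro u hu
        induction hu using Submodule.span_induction with
        | mem u hu =>
          rcases hu with rfl | ⟨j, hj, rfl⟩
          · exact hcd
          · exact hzero j hj
        | zero => simp
        | add u v _ _ hu hv => rw [inner_add_left, hu, hv]; ring
        | smul t u _ hu => rw [real_inner_smul_left, hu]; ring
      have : ⟪d, d⟫ = 0 := hall d hdK
      rw [real_inner_self_eq_norm_sq, hdnorm1] at this
      norm_num at this
    -- pushing along d
    have hpush : ∀ lam0 : E, (∀ j ∈ J.filter (fun j => ¬ ⟪w j, d⟫ < 0), ⟪w j, lam0⟫ ≤ q j) →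
        ∃ lam1 : E, (∀ j ∈ J, ⟪w j, lam1⟫ ≤ q j) ∧ ⟪c, lam1⟫ = ⟪c, lam0⟫ := by
      intro lam0 hfeas0
      set t : ℝ := max 0 (Jneg.sup' hJnegne fun j => (⟪w j, lam0⟫ - q j) / (-⟪w j, d⟫)) with ht
      refine ⟨lam0 + t • d, ?_, ?_⟩
      · intro j hj
        rw [inner_add_right, real_inner_smul_right]
        by_cases hneg : ⟪w j, d⟫ < 0
        · have hmem : j ∈ Jneg := Finset.mem_filter.2 ⟨hj, hneg⟩
          have h1 : (⟪w j, lam0⟫ - q j) / (-⟪w j, d⟫) ≤ t :=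
            le_max_of_le_right (Finset.le_sup' (f := fun j => (⟪w j, lam0⟫ - q j) / (-⟪w j, d⟫)) hmem)
          have h2 : ⟪w j, lam0⟫ - q j ≤ t * (-⟪w j, d⟫) :=
            (div_le_iff₀ (by linarith)).1 h1
          linarith
        · have h0 : ⟪w j, d⟫ = 0 := le_antisymm (hwd j hj) (not_lt.1 hneg)
          rw [h0]
          have := hfeas0 j (Finset.mem_filter.2 ⟨hj, hneg⟩)
          linarith
      · rw [inner_add_right, real_inner_smul_right, hcd]; ring
    -- apply IH on J0
    set J0 : Finset ι := J.filter (fun j => ¬ ⟪w j, d⟫ < 0) with hJ0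
    have hJ0card : J0.card < N := by
      rw [← hcard]
      apply Finset.card_lt_card
      constructor
      · exact Finset.filter_subset _ _
      · intro hsub
        obtain ⟨j, hj⟩ := hJnegne
        have hj' := Finset.mem_filter.1 hj
        have := Finset.mem_filter.1 (hsub hj'.1)
        exact this.2 hj'.2
    obtain ⟨lam1, hlam1feas, hlam1val⟩ := IH J0.card hJ0card J0 rfl
      (by obtain ⟨l0, hl0⟩ := hne
          exact ⟨l0, fun j hj => hl0 j (Finset.mem_filter.1 hj).1⟩)
      (by intro lam0 hfeas0
          obtain ⟨lam1, h1, h2⟩ := hpush lam0 hfeas0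
          rw [← h2]; exact hub lam1 h1)
      (by intro ε hε
          obtain ⟨l0, hl0, hl0'⟩ := happ ε hε
          exact ⟨l0, fun j hj => hl0 j (Finset.mem_filter.1 hj).1, hl0'⟩)
    obtain ⟨lam2, h1, h2⟩ := hpush lam1 hlam1feas
    exact ⟨lam2, h1, by rw [h2, hlam1val]⟩

lemma Qfun_ge {l n m : ℕ} (W : Fin l → Fin m → ℝ) (q : Fin m → ℝ) (x : Fin n → ℝ)
    (p : Xi l n) {lam : Fin l → ℝ} (h : lam ∈ polyD W q) :
    ((∑ i, (p.2 i - ∑ j, p.1 i j * x j) * lam i : ℝ) : EReal) ≤ Qfun W q x p :=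
  le_biSup (fun lam : Fin l → ℝ =>
    ((∑ i, (p.2 i - ∑ j, p.1 i j * x j) * lam i : ℝ) : EReal)) h

lemma Qfun_le {l n m : ℕ} (W : Fin l → Fin m → ℝ) (q : Fin m → ℝ) (x : Fin n → ℝ)
    (p : Xi l n) (b : EReal)
    (h : ∀ lam ∈ polyD W q, ((∑ i, (p.2 i - ∑ j, p.1 i j * x j) * lam i : ℝ) : EReal) ≤ b) :
    Qfun W q x p ≤ b := iSup₂_le h

open scoped RealInnerProductSpace in
lemma lp_attain' {l m : ℕ} (W : Fin l → Fin m → ℝ) (q : Fin m → ℝ) (c : Fin l → ℝ) (s : ℝ)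
    (hne : (polyD W q).Nonempty)
    (hub : ∀ lam ∈ polyD W q, (∑ i, c i * lam i) ≤ s)
    (happ : ∀ ε : ℝ, 0 < ε → ∃ lam ∈ polyD W q, s - ε < ∑ i, c i * lam i) :
    ∃ lam ∈ polyD W q, (∑ i, c i * lam i) = s := by
  classical
  let e : (Fin l → ℝ) → EuclideanSpace ℝ (Fin l) := fun v => (WithLp.equiv 2 (Fin l → ℝ)).symm v
  have hinner : ∀ u v : Fin l → ℝ, ⟪e u, e v⟫ = ∑ i, u i * v i := by
    intro u v
    simp [e, PiLp.inner_apply, RCLike.inner_apply, conj_trivial, mul_comm]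
  have hinner' : ∀ (u : Fin l → ℝ) (v : EuclideanSpace ℝ (Fin l)), ⟪e u, v⟫ = ∑ i, u i * v i := by
    intro u v
    simp [e, PiLp.inner_apply, RCLike.inner_apply, conj_trivial, mul_comm]
  obtain ⟨lam, hfeas, hval⟩ := lp_attain_aux (E := EuclideanSpace ℝ (Fin l)) (ι := Fin m)
    (fun j => e (fun i => W i j)) q (e c) s (Finset.univ.card) Finset.univ rfl
    (by obtain ⟨l0, hl0⟩ := hne
        exact ⟨e l0, fun j _ => by rw [hinner]; exact hl0 j⟩)
    (by intro lam hlam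
        rw [hinner']
        refine hub _ (fun j => ?_)
        have := hlam j (Finset.mem_univ j)
        rwa [hinner'] at this)
    (by intro ε hε
        obtain ⟨l0, hl0, hl0'⟩ := happ ε hε
        exact ⟨e l0, fun j _ => by rw [hinner]; exact hl0 j, by rwa [hinner]⟩)
  refine ⟨WithLp.equiv 2 (Fin l → ℝ) lam, fun j => ?_, ?_⟩
  · have := hfeas j (Finset.mem_univ j)
    rwa [hinner'] at this
  · rw [← hval, hinner']
    exact Finset.sum_congr rfl fun i _ => rfl

/-- Lemma 6, (⇐) direction: if `Q(x,ξ) < +∞` a.s., `Q(x,ξ)1_{ξ∈P}` is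
integrable and `Q(x, E[ξ|P]) = E[Q(x,ξ) | ξ ∈ P]`, then some `λ₀ ∈ D` attains the
supremum `Q(x, ξ(ω))` for ℙ-a.e. `ω` with `ξ(ω) ∈ P`. -/
theorem exact_aggregation_implies_common_optimal_dual
    {Ω : Type*} [MeasurableSpace Ω] {l n m : ℕ}
    (hl : 0 < l) (hn : 0 < n) (hm : 0 < m)
    (W : Fin l → Fin m → ℝ) (q : Fin m → ℝ) (hD : (polyD W q).Nonempty)
    (ℙ : Measure Ω) [IsProbabilityMeasure ℙ]
    (ξ : Ω → Xi l n) (hξmeas : Measurable ξ) (hξint : Integrable ξ ℙ)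
    (x : Fin n → ℝ) (P : Set (Xi l n)) (hP : MeasurableSet P)
    (hpos : 0 < ℙ (ξ ⁻¹' P))
    (hfin : ∀ᵐ ω ∂ℙ, Qfun W q x (ξ ω) < ⊤)
    (hQint : IntegrableOn (fun ω => (Qfun W q x (ξ ω)).toReal) (ξ ⁻¹' P) ℙ)
    (hexact : Qfun W q x (condMean ℙ ξ P) = condQ W q ℙ ξ x P) :
    ∃ lam0 ∈ polyD W q, ∀ᵐ ω ∂ℙ, ξ ω ∈ P →
      ((∑ i, ((ξ ω).2 i - ∑ j, (ξ ω).1 i j * x j) * lam0 i : ℝ) : EReal)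
        = Qfun W q x (ξ ω) := by
  classical
  set A : Set Ω := ξ ⁻¹' P with hA
  have hAmeas : MeasurableSet A := hξmeas hP
  set a : ℝ := (ℙ A).toReal with ha
  have hapos : 0 < a := ENNReal.toReal_pos hpos.ne' (measure_ne_top ℙ A)
  -- the conditional expectation is a real number r
  have hfin' : ∀ᵐ ω ∂ℙ, ξ ω ∈ P → Qfun W q x (ξ ω) ≠ ⊤ :=
    hfin.mono fun ω h _ => h.ne
  set r : ℝ := a⁻¹ * ∫ ω in A, (Qfun W q x (ξ ω)).toReal ∂ℙ with hr
  have hcond : condQ W q ℙ ξ x P = ((r : ℝ) : EReal) := by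
    rw [condQ, if_pos ⟨hfin', hQint⟩]
  have hexact' : Qfun W q x (condMean ℙ ξ P) = ((r : ℝ) : EReal) := by
    rw [hexact, hcond]
  -- CLMs extracting coordinates of the cost vector
  set cbar : Fin l → ℝ := fun i =>
    (condMean ℙ ξ P).2 i - ∑ j, (condMean ℙ ξ P).1 i j * x j with hcbar
  have hcoord : ∀ i : Fin l, cbar i = a⁻¹ * ∫ ω in A,
      ((ξ ω).2 i - ∑ j, (ξ ω).1 i j * x j) ∂ℙ ∧
      Integrable (fun ω => (ξ ω).2 i - ∑ j, (ξ ω).1 i j * x j) ℙ := by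
    intro i
    let Li : (Xi l n) →L[ℝ] ℝ :=
      (ContinuousLinearMap.proj (R := ℝ) (φ := fun _ : Fin l => ℝ) i).comp
        (ContinuousLinearMap.snd ℝ (Fin l → Fin n → ℝ) (Fin l → ℝ)) -
      ∑ j : Fin n, x j • ((ContinuousLinearMap.proj (R := ℝ) (φ := fun _ : Fin n => ℝ) j).comp
        ((ContinuousLinearMap.proj (R := ℝ) (φ := fun _ : Fin l => (Fin n → ℝ)) i).comp
          (ContinuousLinearMap.fst ℝ (Fin l → Fin n → ℝ) (Fin l → ℝ))))
    have hLi : ∀ p : Xi l n, Li p = p.2 i - ∑ j, p.1 i j * x j := by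
      intro p
      simp only [Li, ContinuousLinearMap.sub_apply, ContinuousLinearMap.comp_apply,
        ContinuousLinearMap.coe_snd', ContinuousLinearMap.coe_fst',
        ContinuousLinearMap.proj_apply, ContinuousLinearMap.sum_apply,
        ContinuousLinearMap.smul_apply, smul_eq_mul]
      congr 1
      exact Finset.sum_congr rfl fun j _ => mul_comm _ _
    have hint : Integrable (fun ω => Li (ξ ω)) ℙ := Li.integrable_comp hξint
    constructor
    · have h1 : cbar i = Li (condMean ℙ ξ P) := by rw [hLi]
      rw [h1, condMean, _root_.map_smul, smul_eq_mul,
        ← ContinuousLinearMap.integral_comp_comm Li (hξint.restrict (s := A))]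
      congr 1
      exact integral_congr_ae (Filter.EventuallyEq.of_eq (funext fun ω => hLi (ξ ω)))
    · have : (fun ω => (ξ ω).2 i - ∑ j, (ξ ω).1 i j * x j) = fun ω => Li (ξ ω) := by
        funext ω; rw [hLi]
      rw [this]; exact hint
  -- sup characterization
  have hub : ∀ lam ∈ polyD W q, (∑ i, cbar i * lam i) ≤ r := by
    intro lam hlam
    have h1 : ((∑ i, cbar i * lam i : ℝ) : EReal) ≤ Qfun W q x (condMean ℙ ξ P) :=
      Qfun_ge W q x _ hlam
    rw [hexact'] at h1
    exact_mod_cast h1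
  have happ : ∀ ε : ℝ, 0 < ε → ∃ lam ∈ polyD W q, r - ε < ∑ i, cbar i * lam i := by
    intro ε hε
    by_contra hcon
    push_neg at hcon
    have h1 : Qfun W q x (condMean ℙ ξ P) ≤ ((r - ε : ℝ) : EReal) := by
      refine Qfun_le W q x _ _ fun lam hlam => ?_
      exact_mod_cast hcon lam hlam
    rw [hexact'] at h1
    have : r ≤ r - ε := by exact_mod_cast h1
    linarith
  obtain ⟨lam0, hlam0, hval0⟩ := lp_attain' W q cbar r hD hub happ
  refine ⟨lam0, hlam0, ?_⟩
  -- the gap function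
  set G : Ω → ℝ := fun ω => ∑ i, ((ξ ω).2 i - ∑ j, (ξ ω).1 i j * x j) * lam0 i with hG
  have hGint : IntegrableOn G A ℙ := by
    apply integrable_finset_sum
    intro i _
    exact (((hcoord i).2).restrict (s := A)).mul_const _
  have hGval : ∫ ω in A, G ω ∂ℙ = a * r := by
    rw [hG]
    rw [integral_finset_sum _ (fun i _ => ((hcoord i).2.restrict (s := A)).mul_const _)]
    have h1 : ∀ i : Fin l, ∫ ω in A, ((ξ ω).2 i - ∑ j, (ξ ω).1 i j * x j) * lam0 i ∂ℙ
        = (a * cbar i) * lam0 i := by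
      intro i
      rw [integral_mul_const, (hcoord i).1]
      field_simp
    simp_rw [h1]
    rw [← hval0, Finset.mul_sum]
    apply Finset.sum_congr rfl
    intro i _
    ring
  have hQval : ∫ ω in A, (Qfun W q x (ξ ω)).toReal ∂ℙ = a * r := by
    rw [hr]
    field_simp
  -- pointwise inequality
  have hle : ∀ ω, Qfun W q x (ξ ω) ≠ ⊤ → G ω ≤ (Qfun W q x (ξ ω)).toReal := by
    intro ω hne
    have h1 : ((G ω : ℝ) : EReal) ≤ Qfun W q x (ξ ω) := Qfun_ge W q x _ hlam0
    have h2 := EReal.toReal_le_toReal h1 (EReal.coe_ne_bot _) hne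
    rwa [EReal.toReal_coe] at h2
  -- integral of nonneg gap is zero
  set H : Ω → ℝ := fun ω => (Qfun W q x (ξ ω)).toReal - G ω with hH
  have hHint : Integrable H (ℙ.restrict A) := hQint.sub hGint
  have hHnonneg : 0 ≤ᵐ[ℙ.restrict A] H :=
    ae_restrict_of_ae (hfin.mono fun ω hω => sub_nonneg.2 (hle ω hω.ne))
  have hHzero : ∫ ω in A, H ω ∂ℙ = 0 := by
    rw [hH]
    rw [integral_sub hQint hGint, hGval, hQval]
    ring
  have hae : H =ᵐ[ℙ.restrict A] 0 :=
    (integral_eq_zero_iff_of_nonneg_ae hHnonneg hHint).1 hHzero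
  have hae' : ∀ᵐ ω ∂ℙ, ω ∈ A → H ω = 0 := (ae_restrict_iff' hAmeas).1 hae
  filter_upwards [hae', hfin] with ω h1 h2 hmem
  have h3 : H ω = 0 := h1 hmem
  have h4 : G ω = (Qfun W q x (ξ ω)).toReal := by
    rw [hH] at h3; simp only at h3; linarith
  have hbot : Qfun W q x (ξ ω) ≠ ⊥ := by
    have := Qfun_ge W q x (ξ ω) hlam0
    exact ((EReal.bot_lt_coe _).trans_le this).ne'
  calc ((∑ i, ((ξ ω).2 i - ∑ j, (ξ ω).1 i j * x j) * lam0 i : ℝ) : EReal)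
      = ((G ω : ℝ) : EReal) := rfl
    _ = (((Qfun W q x (ξ ω)).toReal : ℝ) : EReal) := by rw [h4]
    _ = Qfun W q x (ξ ω) := EReal.coe_toReal h2.ne hbot

end
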